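/- The preference relation on interpretations is a strict partial order: for a reliability theory ⟨Σ, ≺⟩, the relation ⊏ on interpretations defined by M ⊏ N iff Prem(M) ≠ Prem(N) and for every φ ∈ Prem(M) \ Prem(N) there exists ψ ∈ Prem(N) \ Prem(M) with φ ≺ ψ, is irreflexive (in particular, M ⊏ N and N ⊏ M cannot both hold) and transitive. -/

import Mathlib

/-- Propositional formulas over atoms `α`, built with `¬` and `→`. -/
inductive Fml (α : Type) : Type
  | atom : α → Fml α
  | neg  : Fml α → Fml α
  | imp  : Fml α → Fml α → Fml α

/-- Satisfaction of a formula by an interpretation (a set of atoms). -/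
def Fml.sat {α : Type} (M : Set α) : Fml α → Prop
  | .atom a => a ∈ M
  | .neg φ => ¬ Fml.sat M φ
  | .imp φ ψ => Fml.sat M φ → Fml.sat M ψ

/-- Semantic entailment `S ⊨ φ`. -/
def Entails {α : Type} (S : Set (Fml α)) (φ : Fml α) : Prop :=
  ∀ M : Set α, (∀ ψ ∈ S, Fml.sat M ψ) → Fml.sat M φ

/-- Satisfiability of a set of formulas. -/
def Satisfiable {α : Type} (S : Set (Fml α)) : Prop :=
  ∃ M : Set α, ∀ ψ ∈ S, Fml.sat M ψ

/-- Propositional tautology. -/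
def Tautology {α : Type} (φ : Fml α) : Prop :=
  ∀ M : Set α, Fml.sat M φ

/-- `prec` is a reliability relation on `Sg`: a strict partial order
(irreflexive, asymmetric, transitive) relating only members of `Sg`. -/
def IsReliability {β : Type} (Sg : Set β) (prec : β → β → Prop) : Prop :=
  (∀ a b, prec a b → a ∈ Sg ∧ b ∈ Sg) ∧
  (∀ a, ¬ prec a a) ∧
  (∀ a b, prec a b → ¬ prec b a) ∧
  (∀ a b c, prec a b → prec b c → prec a c)

/-- `lt` is a strict linear order on `Sg` extending `prec`. -/
def IsLinearExt {β : Type} (Sg : Set β) (prec lt : β → β → Prop) : Prop :=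
  (∀ a b, lt a b → a ∈ Sg ∧ b ∈ Sg) ∧
  (∀ a, ¬ lt a a) ∧
  (∀ a b c, lt a b → lt b c → lt a c) ∧
  (∀ a ∈ Sg, ∀ b ∈ Sg, a ≠ b → lt a b ∨ lt b a) ∧
  (∀ a b, prec a b → lt a b)

/-- Arguments: supporting arguments `P ⇒ φ` and undermining arguments `P ⇏ φ`. -/
inductive Arg (α : Type) : Type
  | sup : Set (Fml α) → Fml α → Arg α
  | und : Set (Fml α) → Fml α → Arg α

/-- The set `A∞` of derivable arguments, as an inductive predicate:
initial arguments, the axiom rule, modus ponens and the contradiction rule. -/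
inductive Derivable {α : Type} (Sg : Set (Fml α)) (lt : Fml α → Fml α → Prop) :
    Arg α → Prop
  | initial {φ} (h : φ ∈ Sg) : Derivable Sg lt (.sup {φ} φ)
  | ax {φ} (h : Tautology φ) : Derivable Sg lt (.sup ∅ φ)
  | mp {P Q φ ψ} (h1 : Derivable Sg lt (.sup P φ))
      (h2 : Derivable Sg lt (.sup Q (.imp φ ψ))) :
      Derivable Sg lt (.sup (P ∪ Q) ψ)
  | contra {P Q φ η} (h1 : Derivable Sg lt (.sup P φ))
      (h2 : Derivable Sg lt (.sup Q (.neg φ)))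
      (hmem : η ∈ P ∪ Q) (hmin : ∀ x ∈ P ∪ Q, x ≠ η → lt η x) :
      Derivable Sg lt (.und ((P ∪ Q) \ {η}) η)

/-- The set `A∞` of derivable arguments. -/
def Ainf {α : Type} (Sg : Set (Fml α)) (lt : Fml α → Fml α → Prop) : Set (Arg α) :=
  {a | Derivable Sg lt a}

/-- `Out_A(S)`: premisses ruled out by undermining arguments in `A`
whose antecedents lie in `S`. -/
def OutA {α : Type} (A : Set (Arg α)) (S : Set (Fml α)) : Set (Fml α) :=
  {φ | ∃ P, Arg.und P φ ∈ A ∧ P ⊆ S}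

open scoped Classical in
/-- The most reliable consistent set of premisses built from an enumeration. -/
noncomputable def mrcBuild {α : Type} (l : List (Fml α)) : Set (Fml α) :=
  l.foldl (fun D σ => if Satisfiable (insert σ D) then insert σ D else D) ∅

/-- `l` enumerates `Sg` so that more reliable premisses come first:
whenever `l[j] ≺ l[k]` one has `k < j`. -/
def IsEnum {β : Type} (Sg : Set β) (prec : β → β → Prop) (l : List β) : Prop :=
  l.Nodup ∧ (∀ x, x ∈ l ↔ x ∈ Sg) ∧
  ∀ (j k : Fin l.length), prec (l.get j) (l.get k) → (k : ℕ) < (j : ℕ)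

/-- `D` is a most reliable consistent set of premisses of `⟨Sg, prec⟩`. -/
def MRC {α : Type} (Sg : Set (Fml α)) (prec : Fml α → Fml α → Prop)
    (D : Set (Fml α)) : Prop :=
  ∃ l : List (Fml α), IsEnum Sg prec l ∧ D = mrcBuild l

/-- `Prem(M)`: the premisses of `Sg` satisfied by interpretation `M`. -/
def PremOf {α : Type} (Sg : Set (Fml α)) (M : Set α) : Set (Fml α) :=
  {φ | φ ∈ Sg ∧ Fml.sat M φ}

/-- The preference relation `M ⊏ N` on interpretations. -/
def Pref {α : Type} (Sg : Set (Fml α)) (prec : Fml α → Fml α → Prop)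
    (M N : Set α) : Prop :=
  PremOf Sg M ≠ PremOf Sg N ∧
  ∀ φ ∈ PremOf Sg M \ PremOf Sg N, ∃ ψ ∈ PremOf Sg N \ PremOf Sg M, prec φ ψ

/-- `Th(⟨Sg, prec⟩)`: formulas entailed by every most reliable consistent set. -/
def ThR {α : Type} (Sg : Set (Fml α)) (prec : Fml α → Fml α → Prop) : Set (Fml α) :=
  {φ | ∀ D, MRC Sg prec D → Entails D φ}

/-- The reliability relation of the `a`-revised theory:
`prec` restricted to `Sg \ {a}`, with `a` strictly more reliable than
every other premiss. -/
def RevPrec {α : Type} (Sg : Set (Fml α)) (prec : Fml α → Fml α → Prop) (a : Fml α) :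
    Fml α → Fml α → Prop :=
  fun x y => (prec x y ∧ x ∈ Sg \ {a} ∧ y ∈ Sg \ {a}) ∨ (x ∈ Sg \ {a} ∧ y = a)

/-- A transitive irreflexive relation has a maximal element on any
finite nonempty set. -/
lemma exists_max_aux {β : Type} (r : β → β → Prop) (hirr : ∀ a, ¬ r a a)
    (htr : ∀ a b c, r a b → r b c → r a c) {s : Set β} (hs : s.Finite) :
    s.Nonempty → ∃ m ∈ s, ∀ x ∈ s, ¬ r m x := by
  refine Set.Finite.induction_on
    (motive := fun s _ => s.Nonempty → ∃ m ∈ s, ∀ x ∈ s, ¬ r m x) s hs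
    (fun hne => absurd hne (by simp)) ?_
  intro a t ha ht ih hne
  rcases t.eq_empty_or_nonempty with rfl | htne
  · exact ⟨a, by simp, by simpa using hirr a⟩
  · obtain ⟨m, hm, hmax⟩ := ih htne
    by_cases hra : r m a
    · refine ⟨a, Set.mem_insert _ _, ?_⟩
      rintro x (rfl | hx)
      · exact fun h => hirr _ h
      · exact fun h => hmax x hx (htr _ _ _ hra h)
    · refine ⟨m, Set.mem_insert_of_mem _ hm, ?_⟩
      rintro x (rfl | hx)
      · exact hra
      · exact hmax x hx

/-- The preference relation `⊏` on interpretations is a strict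
partial order: irreflexive (in particular asymmetric) and transitive. -/

theorem pref_irrefl_asymm_trans {α : Type} (Sg : Set (Fml α)) (hfin : Sg.Finite)
    (prec : Fml α → Fml α → Prop) (hprec : IsReliability Sg prec) :
    (∀ M : Set α, ¬ Pref Sg prec M M) ∧
    (∀ M N : Set α, ¬ (Pref Sg prec M N ∧ Pref Sg prec N M)) ∧
    (∀ L M N : Set α, Pref Sg prec L M → Pref Sg prec M N → Pref Sg prec L N) := by
  obtain ⟨hmem, hirr, hasym, htr⟩ := hprec
  have hPfin : ∀ M : Set α, (PremOf Sg M).Finite := fun M =>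
    hfin.subset (fun φ hφ => hφ.1)
  -- asymmetry (which includes irreflexivity as a consequence for M = N)
  have hA : ∀ M N : Set α, ¬ (Pref Sg prec M N ∧ Pref Sg prec N M) := by
    rintro M N ⟨⟨hne1, h1⟩, ⟨hne2, h2⟩⟩
    set S := (PremOf Sg M \ PremOf Sg N) ∪ (PremOf Sg N \ PremOf Sg M) with hS
    have hSfin : S.Finite := ((hPfin M).diff).union ((hPfin N).diff)
    have hSne : S.Nonempty := by
      rcases Set.not_subset.mp (fun h => hne1 (Set.Subset.antisymm h
        (fun x hx => by
          by_contra hxM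
          rcases h2 x ⟨hx, hxM⟩ with ⟨ψ, ⟨hψM, hψN⟩, _⟩
          exact hψN (h hψM)))) with ⟨x, hxM, hxN⟩
      exact ⟨x, Or.inl ⟨hxM, hxN⟩⟩
    obtain ⟨m, hm, hmax⟩ := exists_max_aux prec hirr htr hSfin hSne
    rcases hm with hm | hm
    · obtain ⟨ψ, hψ, hpψ⟩ := h1 m hm
      exact hmax ψ (Or.inr hψ) hpψ
    · obtain ⟨ψ, hψ, hpψ⟩ := h2 m hm
      exact hmax ψ (Or.inl hψ) hpψ
  refine ⟨fun M hMM => hA M M ⟨hMM, hMM⟩, hA, ?_⟩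
  rintro L M N ⟨hneLM, hLM⟩ ⟨hneMN, hMN⟩
  -- main step: every φ ∈ Prem L \ Prem N has a witness in Prem N \ Prem L
  have key : ∀ φ ∈ PremOf Sg L \ PremOf Sg N,
      ∃ ψ ∈ PremOf Sg N \ PremOf Sg L, prec φ ψ := by
    rintro φ ⟨hφL, hφN⟩
    set U := {y | prec φ y ∧ (y ∈ PremOf Sg M \ PremOf Sg L ∨
      y ∈ PremOf Sg N \ PremOf Sg M)} with hU
    have hUfin : U.Finite :=
      (((hPfin M).diff).union ((hPfin N).diff)).subset
        (fun y hy => hy.2)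
    have hUne : U.Nonempty := by
      by_cases hφM : φ ∈ PremOf Sg M
      · obtain ⟨ψ, hψ, hpψ⟩ := hMN φ ⟨hφM, hφN⟩
        exact ⟨ψ, hpψ, Or.inr hψ⟩
      · obtain ⟨ψ, hψ, hpψ⟩ := hLM φ ⟨hφL, hφM⟩
        exact ⟨ψ, hpψ, Or.inl hψ⟩
    obtain ⟨m, ⟨hpm, hm⟩, hmax⟩ := exists_max_aux prec hirr htr hUfin hUne
    rcases hm with ⟨hmM, hmL⟩ | ⟨hmN, hmM⟩
    · by_cases hmN : m ∈ PremOf Sg N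
      · exact ⟨m, ⟨hmN, hmL⟩, hpm⟩
      · obtain ⟨ψ, hψ, hpψ⟩ := hMN m ⟨hmM, hmN⟩
        exact absurd hpψ (hmax ψ ⟨htr _ _ _ hpm hpψ, Or.inr hψ⟩)
    · by_cases hmL : m ∈ PremOf Sg L
      · obtain ⟨ψ, hψ, hpψ⟩ := hLM m ⟨hmL, hmM⟩
        exact absurd hpψ (hmax ψ ⟨htr _ _ _ hpm hpψ, Or.inl hψ⟩)
      · exact ⟨m, ⟨hmN, hmL⟩, hpm⟩
  refine ⟨?_, key⟩
  -- Prem L ≠ Prem N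
  intro hEq
  set S := (PremOf Sg L \ PremOf Sg M) ∪ (PremOf Sg M \ PremOf Sg L) with hS
  have hSfin : S.Finite := ((hPfin L).diff).union ((hPfin M).diff)
  have hSne : S.Nonempty := by
    rcases Set.not_subset.mp (fun h => hneLM (Set.Subset.antisymm h
      (fun x hx => by
        by_contra hxL
        have hxN : x ∉ PremOf Sg N := hEq ▸ hxL
        rcases hMN x ⟨hx, hxN⟩ with ⟨ψ, ⟨hψN, hψM⟩, _⟩
        have hψL : ψ ∈ PremOf Sg L := hEq ▸ hψN
        exact hψM (h hψL)))) with ⟨x, hxL, hxM⟩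
    exact ⟨x, Or.inl ⟨hxL, hxM⟩⟩
  obtain ⟨m, hm, hmax⟩ := exists_max_aux prec hirr htr hSfin hSne
  rcases hm with hm | ⟨hmM, hmL⟩
  · obtain ⟨ψ, hψ, hpψ⟩ := hLM m hm
    exact hmax ψ (Or.inr hψ) hpψ
  · have hmN : m ∉ PremOf Sg N := fun h => hmL (hEq ▸ h)
    obtain ⟨ψ, ⟨hψN, hψM⟩, hpψ⟩ := hMN m ⟨hmM, hmN⟩
    exact hmax ψ (Or.inl ⟨hEq ▸ hψN, hψM⟩) hpψ
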